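/- arXiv:2504.02631 — 6 statements merged into one kernel-verified Lean document; each statement's English description precedes it below -/
import Mathlib

section
/- Let μ > 0 and let A be a real p×p matrix. The 3p×3p block matrix M = [[μAᵀA, 0, Aᵀ], [0, μI_p, −I_p], [A, −I_p, (2/μ)I_p]] is symmetric positive semidefinite. -/
open Matrix

/-- The 3p×3p block matrix `M = [[μAᵀA, 0, Aᵀ], [0, μI, −I], [A, −I, (2/μ)I]]`
is symmetric positive semidefinite whenever `μ > 0`. -/
theorem stmt2 {p : ℕ} (μ : ℝ) (hμ : 0 < μ) (A : Matrix (Fin p) (Fin p) ℝ) :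
    (Matrix.fromBlocks
      (Matrix.fromBlocks (μ • (Aᵀ * A)) 0 0 (μ • (1 : Matrix (Fin p) (Fin p) ℝ)))
      (Matrix.fromRows Aᵀ (-(1 : Matrix (Fin p) (Fin p) ℝ)))
      (Matrix.fromCols A (-(1 : Matrix (Fin p) (Fin p) ℝ)))
      ((2 / μ) • (1 : Matrix (Fin p) (Fin p) ℝ))).PosSemidef := by
  rw [Matrix.posSemidef_iff_dotProduct_mulVec]
  constructor
  · simp [Matrix.IsHermitian, fromBlocks_transpose, transpose_fromRows, transpose_fromCols,
      transpose_mul, Matrix.mul_assoc]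
  · intro x
    set x₁ : Fin p → ℝ := x ∘ Sum.inl ∘ Sum.inl with hx1
    set x₂ : Fin p → ℝ := x ∘ Sum.inl ∘ Sum.inr with hx2
    set x₃ : Fin p → ℝ := x ∘ Sum.inr with hx3
    have hx : x = Sum.elim (Sum.elim x₁ x₂) x₃ := by
      ext ((i|i)|i) <;> rfl
    rw [hx, fromBlocks_mulVec]
    simp only [Sum.elim_comp_inl, Sum.elim_comp_inr, fromBlocks_mulVec, fromRows_mulVec,
      fromCols_mulVec_sumElim, star_trivial, sumElim_dotProduct_sumElim,
      zero_mulVec, add_zero, zero_add, one_mulVec, neg_mulVec, smul_mulVec,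
      ← mulVec_mulVec, dotProduct_add, dotProduct_sub, dotProduct_smul, dotProduct_neg,
      smul_eq_mul, sub_eq_add_neg, ← neg_add_rev]
    have hkey : ∀ v, x₁ ⬝ᵥ (Aᵀ *ᵥ v) = (A *ᵥ x₁) ⬝ᵥ v := fun v => by
      rw [dotProduct_mulVec, vecMul_transpose]
    simp only [hkey]
    set a : Fin p → ℝ := A *ᵥ x₁ with ha
    have hnn : ∀ v : Fin p → ℝ, 0 ≤ v ⬝ᵥ v := fun v =>
      Finset.sum_nonneg fun i _ => mul_self_nonneg _
    have h1 := hnn (μ • a + x₃)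
    have h2 := hnn (μ • x₂ - x₃)
    simp only [dotProduct_add, add_dotProduct, dotProduct_sub, sub_dotProduct,
      smul_dotProduct, dotProduct_smul, smul_eq_mul] at h1 h2
    rw [dotProduct_comm a x₃, dotProduct_comm x₂ x₃]
    have key : μ * (a ⬝ᵥ a) + μ * (x₂ ⬝ᵥ x₂) + (x₃ ⬝ᵥ a + -(x₃ ⬝ᵥ x₂)) +
        (x₃ ⬝ᵥ a + -(x₃ ⬝ᵥ x₂) + 2 / μ * (x₃ ⬝ᵥ x₃)) =
        ((μ * (μ * a ⬝ᵥ a + x₃ ⬝ᵥ a) + (μ * a ⬝ᵥ x₃ + x₃ ⬝ᵥ x₃)) +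
         (μ * (μ * x₂ ⬝ᵥ x₂ - x₃ ⬝ᵥ x₂) - (μ * x₂ ⬝ᵥ x₃ - x₃ ⬝ᵥ x₃))) / μ := by
      rw [dotProduct_comm a x₃, dotProduct_comm x₂ x₃]
      field_simp
      ring
    rw [key]
    positivity
end

section
/- Let μ > 0, let A be a real p×p matrix, and let η > 0 be such that η I_p − μ AᵀA is positive definite (equivalently, η exceeds the largest eigenvalue of μ AᵀA). Then the 3p×3p block matrix H = [[η I_p, 0, Aᵀ], [0, μI_p, −I_p], [A, −I_p, (2/μ)I_p]] is symmetric positive definite. -/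
open Matrix

/-- If `μ > 0` and `η > 0` is such that `ηI − μAᵀA` is positive definite, then the
3p×3p block matrix `H = [[ηI, 0, Aᵀ], [0, μI, −I], [A, −I, (2/μ)I]]` is
symmetric positive definite. -/
theorem stmt3 {p : ℕ} (μ η : ℝ) (hμ : 0 < μ) (hη : 0 < η)
    (A : Matrix (Fin p) (Fin p) ℝ)
    (hS : (η • (1 : Matrix (Fin p) (Fin p) ℝ) - μ • (Aᵀ * A)).PosDef) :
    (Matrix.fromBlocks
      (Matrix.fromBlocks (η • (1 : Matrix (Fin p) (Fin p) ℝ)) 0 0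
        (μ • (1 : Matrix (Fin p) (Fin p) ℝ)))
      (Matrix.fromRows Aᵀ (-(1 : Matrix (Fin p) (Fin p) ℝ)))
      (Matrix.fromCols A (-(1 : Matrix (Fin p) (Fin p) ℝ)))
      ((2 / μ) • (1 : Matrix (Fin p) (Fin p) ℝ))).PosDef := by
  refine Matrix.PosDef.of_dotProduct_mulVec_pos ?_ ?_
  · simp [Matrix.IsHermitian, fromBlocks_transpose, transpose_fromRows, transpose_fromCols]
  · intro x hx
    set u : Fin p → ℝ := fun i => x (Sum.inl (Sum.inl i)) with hu
    set v : Fin p → ℝ := fun i => x (Sum.inl (Sum.inr i)) with hv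
    set w : Fin p → ℝ := fun i => x (Sum.inr i) with hw
    have hxe : x = Sum.elim (Sum.elim u v) w := by
      funext i
      rcases i with (i | i) | i <;> rfl
    rw [hxe]
    simp only [fromBlocks_mulVec, fromRows_mulVec, fromCols_mulVec_sumElim,
      star_trivial, sumElim_dotProduct_sumElim, Matrix.smul_mulVec,
      Matrix.one_mulVec, Matrix.neg_mulVec, Matrix.zero_mulVec, add_zero, zero_add,
      Matrix.add_mulVec, dotProduct_add, Sum.elim_add_add, Matrix.mulVec_zero,
      Sum.elim_comp_inl, Sum.elim_comp_inr, dotProduct_smul, dotProduct_neg,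
      smul_eq_mul, Matrix.mulVec_neg, mulVec_one]
    have dps : ∀ z : Fin p → ℝ, 0 ≤ z ⬝ᵥ z := fun z =>
      Finset.sum_nonneg fun i _ => mul_self_nonneg _
    have hT : u ⬝ᵥ Aᵀ *ᵥ w = (A *ᵥ u) ⬝ᵥ w := by
      rw [Matrix.dotProduct_mulVec, Matrix.vecMul_transpose]
    have hcm : w ⬝ᵥ A *ᵥ u = (A *ᵥ u) ⬝ᵥ w := dotProduct_comm _ _
    have hvw : v ⬝ᵥ w = w ⬝ᵥ v := dotProduct_comm _ _
    -- expand the square (μ • (A *ᵥ u) + w)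
    have h1 : 0 ≤ μ * μ * ((A *ᵥ u) ⬝ᵥ (A *ᵥ u)) + 2 * μ * ((A *ᵥ u) ⬝ᵥ w) + w ⬝ᵥ w := by
      have := dps (μ • (A *ᵥ u) + w)
      simp only [dotProduct_add, add_dotProduct, smul_dotProduct, dotProduct_smul,
        smul_eq_mul] at this
      rw [dotProduct_comm w (A *ᵥ u)] at this
      linarith
    have h2 : 0 ≤ μ * μ * (v ⬝ᵥ v) - 2 * μ * (v ⬝ᵥ w) + w ⬝ᵥ w := by
      have := dps (μ • v - w)
      simp only [dotProduct_sub, sub_dotProduct, smul_dotProduct, dotProduct_smul,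
        smul_eq_mul] at this
      rw [dotProduct_comm w v] at this
      linarith
    have hSexp : ∀ z : Fin p → ℝ, (η • (1 : Matrix (Fin p) (Fin p) ℝ) - μ • (Aᵀ * A)) *ᵥ z
        = η • z - μ • (Aᵀ *ᵥ (A *ᵥ z)) := by
      intro z
      rw [Matrix.sub_mulVec, Matrix.smul_mulVec, Matrix.smul_mulVec,
        Matrix.one_mulVec, ← Matrix.mulVec_mulVec]
    have hSq : ∀ z : Fin p → ℝ, z ≠ 0 → 0 < η * (z ⬝ᵥ z) - μ * ((A *ᵥ z) ⬝ᵥ (A *ᵥ z)) := by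
      intro z hz
      have := hS.dotProduct_mulVec_pos hz
      rw [hSexp z] at this
      simp only [star_trivial, dotProduct_sub, dotProduct_smul, smul_eq_mul] at this
      rw [Matrix.dotProduct_mulVec, Matrix.vecMul_transpose] at this
      linarith
    rw [hvw] at h2
    have hwv := dps w
    have hvv := dps v
    rw [hT, hcm]
    have hgoal : η * (u ⬝ᵥ u) + μ * (v ⬝ᵥ v) + ((A *ᵥ u) ⬝ᵥ w + -(w ⬝ᵥ v)) +
        ((A *ᵥ u) ⬝ᵥ w + -(v ⬝ᵥ w) + 2 / μ * (w ⬝ᵥ w)) =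
        (μ * η * (u ⬝ᵥ u) + μ * μ * (v ⬝ᵥ v) + 2 * μ * ((A *ᵥ u) ⬝ᵥ w)
          - 2 * μ * (w ⬝ᵥ v) + 2 * (w ⬝ᵥ w)) / μ := by
      rw [hvw]; field_simp; ring
    rw [hgoal, lt_div_iff₀ hμ, zero_mul]
    by_cases hu0 : u = 0
    · have hAu : A *ᵥ u = 0 := by rw [hu0, Matrix.mulVec_zero]
      have huu : u ⬝ᵥ u = 0 := by rw [hu0, dotProduct_zero]
      have hd : (A *ᵥ u) ⬝ᵥ w = 0 := by rw [hAu, zero_dotProduct]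
      by_cases hw0 : w = 0
      · have hv0 : v ≠ 0 := by
          intro h; apply hx; rw [hxe, h, hw0, hu0]; funext i; rcases i with (i|i)|i <;> simp
        have hvpos : 0 < v ⬝ᵥ v :=
          lt_of_le_of_ne (dps v) (fun h => hv0 (dotProduct_self_eq_zero.mp h.symm))
        have hc : w ⬝ᵥ w = 0 := by rw [hw0, dotProduct_zero]
        have he : w ⬝ᵥ v = 0 := by rw [hw0, zero_dotProduct]
        rw [huu, hd, hc, he]
        nlinarith [mul_pos (mul_pos hμ hμ) hvpos]
      · have hcpos : 0 < w ⬝ᵥ w :=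
          lt_of_le_of_ne (dps w) (fun h => hw0 (dotProduct_self_eq_zero.mp h.symm))
        rw [huu, hd]
        nlinarith
    · have hkey := hSq u hu0
      nlinarith [mul_pos hμ hkey]
end

section
/- Let μ > 0, let K ≥ 1, and let A_i be real p×p_i matrices for i = 1, …, K. The block matrix M_K = [[Λ_K, Gᵀ], [G, ((K+1)/μ) I_p]], where Λ_K = blockdiag(μA_1ᵀA_1, …, μA_KᵀA_K, μI_p) and G = (A_1, …, A_K, −I_p), is symmetric positive semidefinite. -/
open Matrix

private lemma aux_quad {n : Type*} [Fintype n] (μ : ℝ) (hμ : 0 < μ) (a b : n → ℝ) :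
    0 ≤ μ * (a ⬝ᵥ a) + 2 * (b ⬝ᵥ a) + μ⁻¹ * (b ⬝ᵥ b) := by
  have h0 : 0 ≤ (μ • a + b) ⬝ᵥ (μ • a + b) := by
    apply Finset.sum_nonneg
    intro i _
    exact mul_self_nonneg _
  have hexp : (μ • a + b) ⬝ᵥ (μ • a + b)
      = μ * μ * (a ⬝ᵥ a) + 2 * μ * (b ⬝ᵥ a) + b ⬝ᵥ b := by
    simp [add_dotProduct, dotProduct_add, smul_dotProduct, dotProduct_smul,
      smul_eq_mul, dotProduct_comm a b]
    ring
  rw [hexp] at h0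
  have hμ' : 0 < μ⁻¹ := inv_pos.mpr hμ
  have key : μ * (a ⬝ᵥ a) + 2 * (b ⬝ᵥ a) + μ⁻¹ * (b ⬝ᵥ b)
      = μ⁻¹ * (μ * μ * (a ⬝ᵥ a) + 2 * μ * (b ⬝ᵥ a) + b ⬝ᵥ b) := by
    field_simp
  rw [key]
  exact mul_nonneg hμ'.le h0

/-- With `Λ_K = blockdiag(μA₁ᵀA₁, …, μA_KᵀA_K, μI_p)` and `G = (A₁, …, A_K, −I_p)`,
the block matrix `M_K = [[Λ_K, Gᵀ], [G, ((K+1)/μ) I_p]]` is symmetric positive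
semidefinite whenever `μ > 0` and `K ≥ 1`. -/
theorem stmt4 {p K : ℕ} (hK : 1 ≤ K) (μ : ℝ) (hμ : 0 < μ)
    (pdim : Fin K → ℕ) (A : ∀ i : Fin K, Matrix (Fin p) (Fin (pdim i)) ℝ) :
    (Matrix.fromBlocks
      (Matrix.fromBlocks
        (Matrix.blockDiagonal' (fun i => μ • ((A i)ᵀ * A i))) 0 0
        (μ • (1 : Matrix (Fin p) (Fin p) ℝ)))
      (Matrix.fromCols
        (Matrix.of fun (r : Fin p) (s : Σ i : Fin K, Fin (pdim i)) => A s.1 r s.2)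
        (-(1 : Matrix (Fin p) (Fin p) ℝ)))ᵀ
      (Matrix.fromCols
        (Matrix.of fun (r : Fin p) (s : Σ i : Fin K, Fin (pdim i)) => A s.1 r s.2)
        (-(1 : Matrix (Fin p) (Fin p) ℝ)))
      (((K + 1 : ℝ) / μ) • (1 : Matrix (Fin p) (Fin p) ℝ))).PosSemidef := by
  set C : Matrix (Fin p) (Σ i : Fin K, Fin (pdim i)) ℝ :=
    Matrix.of fun (r : Fin p) (s : Σ i : Fin K, Fin (pdim i)) => A s.1 r s.2 with hC
  rw [Matrix.posSemidef_iff_dotProduct_mulVec]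
  constructor
  · -- Hermitian
    show _ᴴ = _
    rw [Matrix.conjTranspose_eq_transpose_of_trivial]
    simp only [Matrix.fromBlocks_transpose, Matrix.blockDiagonal'_transpose,
      Matrix.transpose_smul, Matrix.transpose_one, Matrix.transpose_zero,
      Matrix.transpose_transpose, Matrix.transpose_mul]
  · intro x
    set u : (Σ i : Fin K, Fin (pdim i)) → ℝ := fun s => x (Sum.inl (Sum.inl s)) with hu
    set w : Fin p → ℝ := fun r => x (Sum.inl (Sum.inr r)) with hw
    set v : Fin p → ℝ := fun r => x (Sum.inr r) with hv
    have hx : x = Sum.elim (Sum.elim u w) v := by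
      funext z
      rcases z with (z | z) | z <;> rfl
    set y : Fin K → Fin p → ℝ := fun i => A i *ᵥ (fun t => u ⟨i, t⟩) with hy
    -- blockDiagonal' quadratic form
    have hD : u ⬝ᵥ (Matrix.blockDiagonal' (fun i => μ • ((A i)ᵀ * A i)) *ᵥ u)
        = ∑ i, μ * (y i ⬝ᵥ y i) := by
      have hDu : ∀ s : Σ i : Fin K, Fin (pdim i),
          (Matrix.blockDiagonal' (fun i => μ • ((A i)ᵀ * A i)) *ᵥ u) s
            = μ * ((((A s.1)ᵀ * A s.1) *ᵥ fun t => u ⟨s.1, t⟩) s.2) := by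
        rintro ⟨i, s⟩
        show ∑ jt : Σ j : Fin K, Fin (pdim j), _ = _
        rw [← Finset.univ_sigma_univ, Finset.sum_sigma]
        rw [Finset.sum_eq_single i]
        · simp [Matrix.mulVec, dotProduct, Finset.mul_sum, mul_assoc]
        · intro j _ hj
          simp [Matrix.blockDiagonal'_apply_ne _ _ _ (Ne.symm hj)]
        · simp
      simp only [dotProduct, hDu]
      rw [← Finset.univ_sigma_univ, Finset.sum_sigma]
      refine Finset.sum_congr rfl fun i _ => ?_
      have h1 : ∑ s, u ⟨i, s⟩ * (μ * ((((A i)ᵀ * A i) *ᵥ fun t => u ⟨i, t⟩) s))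
          = μ * ((fun t => u ⟨i, t⟩) ⬝ᵥ (((A i)ᵀ * A i) *ᵥ fun t => u ⟨i, t⟩)) := by
        simp [dotProduct, Finset.mul_sum, mul_left_comm]
      rw [h1, ← Matrix.mulVec_mulVec, Matrix.dotProduct_mulVec, Matrix.vecMul_transpose, hy]
      rfl
    -- C quadratic cross term
    have hCu : C *ᵥ u = ∑ i, y i := by
      funext r
      show ∑ s : Σ i : Fin K, Fin (pdim i), _ = _
      rw [← Finset.univ_sigma_univ, Finset.sum_sigma, Finset.sum_apply]
      exact Finset.sum_congr rfl fun i _ => rfl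
    have hCross : v ⬝ᵥ (C *ᵥ u) = ∑ i, v ⬝ᵥ y i := by
      rw [hCu]
      simp [dotProduct, Finset.sum_apply, Finset.mul_sum]
      rw [Finset.sum_comm]
    have hCross' : u ⬝ᵥ (Cᵀ *ᵥ v) = ∑ i, v ⬝ᵥ y i := by
      rw [Matrix.mulVec_transpose, dotProduct_comm, ← Matrix.dotProduct_mulVec, hCross]
    rw [hx]
    simp only [star_trivial, Matrix.fromBlocks_mulVec, sumElim_dotProduct_sumElim,
      Matrix.transpose_fromCols, Matrix.fromRows_mulVec, Matrix.fromCols_mulVec_sumElim,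
      Matrix.zero_mulVec, add_zero, zero_add, Matrix.smul_mulVec, Matrix.one_mulVec,
      Matrix.neg_mulVec, Matrix.transpose_neg, Matrix.transpose_one, dotProduct_add,
      dotProduct_neg, dotProduct_smul, smul_eq_mul]
    simp only [Sum.elim_comp_inl, Sum.elim_comp_inr, Matrix.fromCols_mulVec_sumElim,
      Matrix.neg_mulVec, Matrix.one_mulVec, dotProduct_add, dotProduct_neg]
    rw [hD, hCross, hCross']
    have hs : 0 ≤ ∑ i, (μ * (y i ⬝ᵥ y i) + 2 * (v ⬝ᵥ y i) + μ⁻¹ * (v ⬝ᵥ v)) :=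
      Finset.sum_nonneg fun i _ => aux_quad μ hμ (y i) v
    simp only [Finset.sum_add_distrib, Finset.sum_const, nsmul_eq_mul, Finset.card_univ,
      Fintype.card_fin, ← Finset.mul_sum] at hs
    simp only [← Finset.mul_sum]
    have hw0 := aux_quad μ hμ (-w) v
    have e1 : (-w) ⬝ᵥ (-w) = w ⬝ᵥ w := by simp
    have e2 : v ⬝ᵥ (-w) = -(v ⬝ᵥ w) := by simp
    rw [e1, e2] at hw0
    have hvw : w ⬝ᵥ v = v ⬝ᵥ w := dotProduct_comm w v
    have hc : ((K : ℝ) + 1) / μ * (v ⬝ᵥ v) = (K : ℝ) * (μ⁻¹ * (v ⬝ᵥ v)) + μ⁻¹ * (v ⬝ᵥ v) := by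
      field_simp
    linarith [hs, hw0]
end

section
/- Suppose the sequence g^t = (β^t, z^t, u^t), with z^t ∈ Z_r for all t, satisfies the PPA variational inequality with a symmetric positive definite matrix H, and let g* = (β*, z*, u*) be any saddle point. Then for every t, ‖g^{t+1} − g*‖_H² ≤ ‖g^t − g*‖_H² − ‖g^{t+1} − g^t‖_H². -/
open Matrix Filter

noncomputable section

/-- Vectors in ℝ^p. -/
abbrev Vec (p : ℕ) := Fin p → ℝ

/-- Triples `g = (β, z, u) ∈ ℝ^p × ℝ^p × ℝ^p`. -/
abbrev Trip (p : ℕ) := Vec p × Vec p × Vec p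

/-- Index type for ℝ^{3p}. -/
abbrev Idx3 (p : ℕ) := Fin p ⊕ Fin p ⊕ Fin p

/-- Identify a triple `(β, z, u)` with a vector in ℝ^{3p}. -/
def toSum {p : ℕ} (g : Trip p) : Idx3 p → ℝ := Sum.elim g.1 (Sum.elim g.2.1 g.2.2)

/-- The operator `F(β, z, u) = (−Aᵀu, u, Aβ − z − c)`. -/
def Fop {p : ℕ} (A : Matrix (Fin p) (Fin p) ℝ) (c : Vec p) (g : Trip p) : Trip p :=
  (-(Aᵀ *ᵥ g.2.2), g.2.2, A *ᵥ g.1 - g.2.1 - c)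

/-- Membership in the box `Z_r = {z : ‖z‖_∞ ≤ r}`. -/
def inZ {p : ℕ} (r : ℝ) (z : Vec p) : Prop := ∀ j, |z j| ≤ r

/-- The ℓ₁ norm on ℝ^p. -/
def l1 {p : ℕ} (β : Vec p) : ℝ := ∑ j, |β j|

/-- The Euclidean inner product on ℝ^{3p}. -/
def ip {p : ℕ} (v w : Trip p) : ℝ := toSum v ⬝ᵥ toSum w

/-- The bilinear form `⟨v, H w⟩` on ℝ^{3p}; in particular `ipH H v v = ‖v‖_H²`. -/
def ipH {p : ℕ} (H : Matrix (Idx3 p) (Idx3 p) ℝ) (v w : Trip p) : ℝ :=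
  toSum v ⬝ᵥ (H *ᵥ toSum w)

/-- `g* = (β*, z*, u*)` is a saddle point: `z* ∈ Z_r` and
`‖β‖₁ − ‖β*‖₁ + ⟨g − g*, F(g*)⟩ ≥ 0` for all `g = (β, z, u)` with `z ∈ Z_r`. -/
def IsSaddle {p : ℕ} (A : Matrix (Fin p) (Fin p) ℝ) (c : Vec p) (r : ℝ)
    (gs : Trip p) : Prop :=
  inZ r gs.2.1 ∧ ∀ g : Trip p, inZ r g.2.1 →
    0 ≤ l1 g.1 - l1 gs.1 + ip (g - gs) (Fop A c gs)

/-- The sequence `g^t` satisfies the PPA variational inequality with matrix `H`: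
for every `t` and every `g = (β, z, u)` with `z ∈ Z_r`,
`‖β‖₁ − ‖β^{t+1}‖₁ + ⟨g − g^{t+1}, F(g^{t+1})⟩ ≥ ⟨g − g^{t+1}, H(g^t − g^{t+1})⟩`. -/
def SatisfiesPVI {p : ℕ} (A : Matrix (Fin p) (Fin p) ℝ) (c : Vec p) (r : ℝ)
    (H : Matrix (Idx3 p) (Idx3 p) ℝ) (g : ℕ → Trip p) : Prop :=
  ∀ t : ℕ, ∀ gg : Trip p, inZ r gg.2.1 →
    ipH H (gg - g (t + 1)) (g t - g (t + 1)) ≤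
      l1 gg.1 - l1 (g (t + 1)).1 + ip (gg - g (t + 1)) (Fop A c (g (t + 1)))

section AuxStmt9
variable {p : ℕ}

lemma toSum_sub' (v w : Trip p) : toSum (v - w) = toSum v - toSum w := by
  funext i; rcases i with i | i | i <;> simp [toSum, Prod.sub_def]

lemma toSum_neg' (v : Trip p) : toSum (-v) = -(toSum v) := by
  funext i; rcases i with i | i | i <;> simp [toSum, Prod.fst_neg, Prod.snd_neg]

lemma ip_eq' (v w : Trip p) :
    ip v w = v.1 ⬝ᵥ w.1 + v.2.1 ⬝ᵥ w.2.1 + v.2.2 ⬝ᵥ w.2.2 := by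
  simp [ip, toSum, dotProduct, Fintype.sum_sum_type]; ring

lemma tkey' {n : Type*} [Fintype n] (A : Matrix n n ℝ) (x y : n → ℝ) :
    x ⬝ᵥ (Aᵀ *ᵥ y) = y ⬝ᵥ (A *ᵥ x) := by
  rw [Matrix.dotProduct_mulVec, Matrix.vecMul_transpose, dotProduct_comm]

lemma ip_sub_right' (v x y : Trip p) : ip v (x - y) = ip v x - ip v y := by
  simp [ip, toSum_sub', dotProduct_sub]

lemma ip_neg_left' (v x : Trip p) : ip (-v) x = -(ip v x) := by
  simp [ip, toSum_neg', neg_dotProduct]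

lemma skew'' (A : Matrix (Fin p) (Fin p) ℝ) (a b d : Vec p) :
    a ⬝ᵥ (-(Aᵀ *ᵥ d)) + b ⬝ᵥ d + d ⬝ᵥ (A *ᵥ a - b) = 0 := by
  rw [dotProduct_neg, tkey', dotProduct_sub, dotProduct_comm b d]
  ring

lemma ip_skew' (A : Matrix (Fin p) (Fin p) ℝ) (c : Vec p) (v w : Trip p) :
    ip (v - w) (Fop A c v - Fop A c w) = 0 := by
  have h1 : Fop A c v - Fop A c w =
      (-(Aᵀ *ᵥ (v.2.2 - w.2.2)), v.2.2 - w.2.2, A *ᵥ (v.1 - w.1) - (v.2.1 - w.2.1)) := by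
    simp only [Fop, Prod.sub_def, Matrix.mulVec_sub]
    refine Prod.ext ?_ (Prod.ext rfl ?_)
    · simp [neg_sub]; abel
    · simp; abel
  rw [h1, ip_eq']
  exact skew'' A (v.1 - w.1) (v.2.1 - w.2.1) (v.2.2 - w.2.2)

end AuxStmt9

/-- Contraction: if `g^t` (with `z^t ∈ Z_r`) satisfies the PPA variational inequality
with a symmetric positive definite `H` and `g*` is a saddle point, then
`‖g^{t+1} − g*‖_H² ≤ ‖g^t − g*‖_H² − ‖g^{t+1} − g^t‖_H²` for every `t`. -/
theorem stmt9 {p : ℕ} (A : Matrix (Fin p) (Fin p) ℝ) (c : Vec p) (r : ℝ) (hr : 0 ≤ r)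
    (H : Matrix (Idx3 p) (Idx3 p) ℝ) (hH : H.PosDef)
    (g : ℕ → Trip p) (hz : ∀ t, inZ r (g t).2.1)
    (hPVI : SatisfiesPVI A c r H g)
    (gs : Trip p) (hgs : IsSaddle A c r gs) :
    ∀ t : ℕ, ipH H (g (t + 1) - gs) (g (t + 1) - gs) ≤
      ipH H (g t - gs) (g t - gs) - ipH H (g (t + 1) - g t) (g (t + 1) - g t) := by
  intro t
  have hkey : ipH H (gs - g (t + 1)) (g t - g (t + 1)) ≤ 0 := by
    have h1 := hPVI t gs hgs.1
    have h2 := hgs.2 (g (t + 1)) (hz (t + 1))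
    have h3 : ip (gs - g (t + 1)) (Fop A c gs - Fop A c (g (t + 1))) = 0 :=
      ip_skew' A c gs (g (t + 1))
    have h4 : ip (g (t + 1) - gs) (Fop A c gs) = -(ip (gs - g (t + 1)) (Fop A c gs)) := by
      rw [← ip_neg_left', neg_sub]
    rw [ip_sub_right'] at h3
    linarith
  have hsym : Hᵀ = H := by
    have := hH.1
    simpa [Matrix.IsHermitian, Matrix.conjTranspose_eq_transpose_of_trivial] using this
  have hHsymm : ∀ x y : Idx3 p → ℝ, x ⬝ᵥ (H *ᵥ y) = y ⬝ᵥ (H *ᵥ x) := by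
    intro x y
    conv_lhs => rw [← hsym, tkey']
  unfold ipH at hkey ⊢
  have had : toSum (g t - gs) = toSum (g (t + 1) - gs) + toSum (g t - g (t + 1)) := by
    rw [toSum_sub', toSum_sub', toSum_sub']; abel
  have hnd : toSum (g (t + 1) - g t) = -(toSum (g t - g (t + 1))) := by
    rw [toSum_sub', toSum_sub']; abel
  have hna : toSum (gs - g (t + 1)) = -(toSum (g (t + 1) - gs)) := by
    rw [toSum_sub', toSum_sub']; abel
  rw [hna] at hkey
  set a := toSum (g (t + 1) - gs)
  set d := toSum (g t - g (t + 1))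
  rw [had, hnd]
  have hs : d ⬝ᵥ (H *ᵥ a) = a ⬝ᵥ (H *ᵥ d) := hHsymm d a
  have hk : -(a ⬝ᵥ (H *ᵥ d)) ≤ 0 := by simpa [neg_dotProduct] using hkey
  simp only [add_dotProduct, Matrix.mulVec_add, dotProduct_add,
    neg_dotProduct, Matrix.mulVec_neg, dotProduct_neg, neg_neg]
  linarith
end
end

section
/- Let A ∈ ℝ^{p×p}, c ∈ ℝ^p, μ > 0, r ≥ 0, and let η > 0 be such that η I_p − μ AᵀA is positive definite. Given (β^t, z^t, u^t) with z^t ∈ Z_r, define β^{t+1} = S_{1/η}(β^t + Aᵀu^t/η), z^{t+1} = clip_r(z^t − u^t/μ), and u^{t+1} = u^t − (μ/2)[2(Aβ^{t+1} − z^{t+1} − c) − (Aβ^t − z^t − c)]. Then z^{t+1} ∈ Z_r and for every g = (β, z, u) with z ∈ Z_r: ‖β‖₁ − ‖β^{t+1}‖₁ + ⟨g − g^{t+1}, F(g^{t+1})⟩ ≥ ⟨g − g^{t+1}, H(g^t − g^{t+1})⟩, where H = [[η I_p, 0, Aᵀ], [0, μI_p, −I_p], [A, −I_p, (2/μ)I_p]].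 -/
open Matrix Filter

noncomputable section

/-- Soft-thresholding at level `κ`: `S_κ(x) = sign(x) · max(|x| − κ, 0)`. -/
def soft (κ x : ℝ) : ℝ := Real.sign x * max (|x| - κ) 0

/-- Clipping to `[−r, r]`: `clip_r(x) = min(max(x, −r), r)`. -/
def clip (r x : ℝ) : ℝ := min (max x (-r)) r

lemma soft_le (η w b : ℝ) (hη : 0 < η) :
    η * (w - soft (1/η) w) * (b - soft (1/η) w) + |soft (1/η) w| ≤ |b| := by
  have hκ : 0 < 1/η := by positivity
  have hinv : η * (1/η) = 1 := mul_one_div_cancel hη.ne'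
  rcases le_or_gt w (-(1/η)) with hw | hw
  · have hwneg : w < 0 := by linarith
    have hx : soft (1/η) w = w + 1/η := by
      rw [soft, Real.sign_of_neg hwneg, abs_of_neg hwneg,
        max_eq_left (by linarith)]; ring
    rw [hx, abs_of_nonpos (by linarith)]
    have h1 : η * (w - (w + 1/η)) = -1 := by linarith [hinv]
    rw [h1]
    nlinarith [neg_abs_le b]
  rcases le_or_gt (1/η) w with hw2 | hw2
  · have hwpos : 0 < w := by linarith
    have hx : soft (1/η) w = w - 1/η := by
      rw [soft, Real.sign_of_pos hwpos, abs_of_pos hwpos,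
        max_eq_left (by linarith)]; ring
    rw [hx, abs_of_nonneg (by linarith)]
    have h1 : η * (w - (w - 1/η)) = 1 := by linarith [hinv]
    rw [h1]
    nlinarith [le_abs_self b]
  · have hx : soft (1/η) w = 0 := by
      rw [soft, max_eq_right]
      · ring
      · rw [sub_nonpos, abs_le]; constructor <;> linarith
    rw [hx]
    have e : η * (w - 0) * (b - 0) + |(0:ℝ)| = η * w * b := by simp
    rw [e]
    have h1 : η * w * b ≤ |η * w * b| := le_abs_self _
    have h2 : |η * w * b| = (η * |w|) * |b| := by
      rw [abs_mul, abs_mul, abs_of_pos hη]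
    have h3 : η * |w| ≤ 1 := by
      have hw3 : |w| ≤ 1/η := by rw [abs_le]; constructor <;> linarith
      nlinarith
    nlinarith [abs_nonneg b, abs_nonneg w]

lemma clip_mem (r v : ℝ) (hr : 0 ≤ r) : |clip r v| ≤ r := by
  rw [abs_le, clip]
  exact ⟨le_min (le_trans (by linarith) (le_max_right v (-r))) (by linarith),
    min_le_right _ _⟩

lemma clip_proj (r v b : ℝ) (hb : |b| ≤ r) : (b - clip r v) * (v - clip r v) ≤ 0 := by
  rw [abs_le] at hb
  rw [clip]
  rcases le_total v (-r) with h | h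
  · rw [max_eq_right h, min_eq_left (by linarith)]
    nlinarith
  · rw [max_eq_left h]
    rcases le_total v r with h2 | h2
    · rw [min_eq_left h2]; nlinarith
    · rw [min_eq_right h2]; nlinarith

lemma key (μ η r βt zt ut β z u cc s1 s2 t1 t2 βn zn un : ℝ)
    (hμ : 0 < μ) (hη : 0 < η) (hz : |z| ≤ r)
    (hβn : βn = soft (1/η) (βt + t1/η))
    (hzn : zn = clip r (zt - ut/μ))
    (hun : un = ut - μ/2 * (2*(s2 - zn - cc) - (s1 - zt - cc))) :
    (β - βn) * (η*(βt - βn) + (t1 - t2)) + (z - zn)*(μ*(zt - zn) - (ut - un))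
      + (u - un)*((s1 - s2) - (zt - zn) + (2/μ)*(ut - un))
    ≤ (|β| - |βn|) + ((β - βn)*(-t2) + (z - zn)*un + (u - un)*(s2 - zn - cc)) := by
  have hηi : η * η⁻¹ = 1 := mul_inv_cancel₀ hη.ne'
  have hμi : μ * μ⁻¹ = 1 := mul_inv_cancel₀ hμ.ne'
  have h1 := soft_le η (βt + t1/η) β hη
  rw [← hβn] at h1
  have e1 : η * (βt + t1/η - βn) = η*(βt - βn) + t1 := by
    linear_combination t1 * hηi
  rw [e1] at h1
  have h2 := clip_proj r (zt - ut/μ) z hz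
  rw [← hzn] at h2
  have h2' : μ * ((z - zn) * (zt - ut/μ - zn)) ≤ 0 :=
    mul_nonpos_of_nonneg_of_nonpos hμ.le h2
  have e2 : μ * ((z - zn) * (zt - ut/μ - zn)) = (z - zn)*(μ*(zt - zn) - ut) := by
    linear_combination ((zn - z) * ut) * hμi
  rw [e2] at h2'
  have h3 : (2/μ)*(ut - un) = 2*(s2 - zn - cc) - (s1 - zt - cc) := by
    rw [hun]; linear_combination (2*(s2 - zn - cc) - (s1 - zt - cc)) * hμi
  have h3' : (u - un)*((2/μ)*(ut - un)) = (u - un)*(2*(s2 - zn - cc) - (s1 - zt - cc)) := by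
    rw [h3]
  nlinarith [h1, h2', h3']

lemma ip_eval {p : ℕ} (a b c d e f : Vec p) :
    ip (a, b, c) (d, e, f) = ∑ j, (a j * d j + b j * e j + c j * f j) := by
  simp [ip, toSum, dotProduct, Fintype.sum_sum_type, Finset.sum_add_distrib]
  ring

lemma ipH_eval {p : ℕ} (A : Matrix (Fin p) (Fin p) ℝ) (μ η : ℝ) (a b c d e f : Vec p) :
    ipH (Matrix.fromBlocks (η • (1 : Matrix (Fin p) (Fin p) ℝ))
          (Matrix.fromCols (0 : Matrix (Fin p) (Fin p) ℝ) Aᵀ)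
          (Matrix.fromRows (0 : Matrix (Fin p) (Fin p) ℝ) A)
          (Matrix.fromBlocks (μ • (1 : Matrix (Fin p) (Fin p) ℝ))
            (-(1 : Matrix (Fin p) (Fin p) ℝ)) (-(1 : Matrix (Fin p) (Fin p) ℝ))
            ((2 / μ) • (1 : Matrix (Fin p) (Fin p) ℝ)))) (a, b, c) (d, e, f)
    = ∑ j, (a j * (η * d j + (Aᵀ *ᵥ f) j) + b j * (μ * e j - f j)
        + c j * ((A *ᵥ d) j - e j + (2/μ) * f j)) := by
  have hx : toSum ((d, e, f) : Trip p) = Sum.elim d (Sum.elim e f) := rfl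
  rw [ipH, hx, fromBlocks_mulVec]
  simp only [Sum.elim_comp_inl, Sum.elim_comp_inr, fromCols_mulVec_sumElim,
    fromBlocks_mulVec, smul_mulVec, one_mulVec, zero_mulVec, neg_mulVec,
    fromRows_mulVec]
  simp [toSum, dotProduct, Fintype.sum_sum_type, Finset.sum_add_distrib,
    mul_add, mul_sub, mul_comm, smul_mulVec]
  ring

/-- One step of the (non-parallel, linearized) PPA for the Dantzig selector satisfies
the PPA variational inequality with matrix
`H = [[ηI, 0, Aᵀ], [0, μI, −I], [A, −I, (2/μ)I]]`, and keeps `z^{t+1} ∈ Z_r`. -/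
theorem stmt16 {p : ℕ} (A : Matrix (Fin p) (Fin p) ℝ) (c : Vec p)
    (μ η r : ℝ) (hμ : 0 < μ) (hη : 0 < η) (hr : 0 ≤ r)
    (hS : (η • (1 : Matrix (Fin p) (Fin p) ℝ) - μ • (Aᵀ * A)).PosDef)
    (βt zt ut βn zn un : Vec p) (hzt : inZ r zt)
    (hβn : βn = fun j => soft (1 / η) (βt j + (Aᵀ *ᵥ ut) j / η))
    (hzn : zn = fun j => clip r (zt j - ut j / μ))
    (hun : un = ut - (μ / 2) •
      ((2 : ℝ) • (A *ᵥ βn - zn - c) - (A *ᵥ βt - zt - c))) :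
    inZ r zn ∧
      ∀ gg : Trip p, inZ r gg.2.1 →
        ipH (Matrix.fromBlocks (η • (1 : Matrix (Fin p) (Fin p) ℝ))
            (Matrix.fromCols (0 : Matrix (Fin p) (Fin p) ℝ) Aᵀ)
            (Matrix.fromRows (0 : Matrix (Fin p) (Fin p) ℝ) A)
            (Matrix.fromBlocks (μ • (1 : Matrix (Fin p) (Fin p) ℝ))
              (-(1 : Matrix (Fin p) (Fin p) ℝ)) (-(1 : Matrix (Fin p) (Fin p) ℝ))
              ((2 / μ) • (1 : Matrix (Fin p) (Fin p) ℝ))))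
          (gg - (βn, zn, un)) ((βt, zt, ut) - (βn, zn, un)) ≤
        l1 gg.1 - l1 βn + ip (gg - (βn, zn, un)) (Fop A c (βn, zn, un)) := by
  constructor
  · rw [hzn]; intro j; exact clip_mem r _ hr
  rintro ⟨β, z, u⟩ hz
  have hd : ((β, z, u) : Trip p) - (βn, zn, un) = (β - βn, z - zn, u - un) := rfl
  have hd2 : ((βt, zt, ut) : Trip p) - (βn, zn, un) = (βt - βn, zt - zn, ut - un) := rfl
  rw [hd, hd2, ipH_eval]
  simp only [Fop]
  rw [ip_eval, l1, l1, ← Finset.sum_sub_distrib, ← Finset.sum_add_distrib]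
  apply Finset.sum_le_sum
  intro j _
  simp only [Pi.sub_apply, Pi.neg_apply, Matrix.mulVec_sub]
  have hβnj : βn j = soft (1/η) (βt j + (Aᵀ *ᵥ ut) j / η) := by simp only [hβn]
  have hznj : zn j = clip r (zt j - ut j / μ) := by simp only [hzn]
  have hunj : un j = ut j - μ/2 * (2*((A *ᵥ βn) j - zn j - c j)
      - ((A *ᵥ βt) j - zt j - c j)) := by
    rw [hun]; simp [Pi.sub_apply, Pi.smul_apply, smul_eq_mul]
    try ring
  have := key μ η r (βt j) (zt j) (ut j) (β j) (z j) (u j) (c j)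
    ((A *ᵥ βt) j) ((A *ᵥ βn) j) ((Aᵀ *ᵥ ut) j) ((Aᵀ *ᵥ un) j)
    (βn j) (zn j) (un j) hμ hη (hz j) hβnj hznj hunj
  nlinarith [this]
end
end

section
/- Let c ∈ ℝ^p, μ > 0, r ≥ 0, let {I_1, …, I_K} be a partition of {1, …, p} with A_i ∈ ℝ^{p×p_i} the corresponding column blocks of A ∈ ℝ^{p×p}, and let η_i > 0 satisfy η_i I_{p_i} − μ A_iᵀA_i positive definite for each i. Given (β^t, z^t, u^t) with z^t ∈ Z_r, define β_i^{t+1} = S_{1/η_i}(β_i^t + A_iᵀu^t/η_i) for each i, z^{t+1} = clip_r(z^t − u^t/μ), and u^{t+1} = u^t − (μ/(K+1))[2(Σ_i A_i β_i^{t+1} − z^{t+1} − c) − (Σ_i A_i β_i^t − z^t − c)]. Then for every g = (β, z, u) with z ∈ Z_r: ‖β‖₁ − ‖β^{t+1}‖₁ + ⟨g − g^{t+1}, F(g^{t+1})⟩ ≥ ⟨g − g^{t+1}, H_K(g^t − g^{t+1})⟩, where H_K = [[D, 0, Aᵀ], [0, μI_p, −I_p], [A, −I_p, ((K+1)/μ)I_p]]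 with D the block-diagonal matrix whose i-th block is η_i I_{p_i}. -/
open Matrix Filter

noncomputable section

/-- The column block `A_i` of `A` corresponding to block `i` of the partition `π`. -/
def Ablock {p K : ℕ} (A : Matrix (Fin p) (Fin p) ℝ) (π : Fin p → Fin K) (i : Fin K) :
    Matrix (Fin p) {j // π j = i} ℝ :=
  A.submatrix id Subtype.val

/-- `Σ_i A_i β_i`, the blockwise product over the partition `π`. -/
def blockSum {p K : ℕ} (A : Matrix (Fin p) (Fin p) ℝ) (π : Fin p → Fin K)
    (β : Fin p → ℝ) : Fin p → ℝ :=
  ∑ i : Fin K, Ablock A π i *ᵥ (fun j : {j // π j = i} => β j.val)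

lemma soft_key (η w x : ℝ) (hη : 0 < η) :
    (x - soft (1/η) w) * (η * (w - soft (1/η) w)) ≤ |x| - |soft (1/η) w| := by
  set xn := soft (1/η) w with hxn
  have hs1 : |η * (w - xn)| ≤ 1 ∧ η * (w - xn) * xn = |xn| := by
    rw [hxn]; unfold soft
    rcases lt_trichotomy w 0 with h | h | h
    · rw [Real.sign_of_neg h, abs_of_neg h]
      rcases le_total (-w - 1/η) 0 with h2 | h2
      · rw [max_eq_right h2]
        constructor
        · rw [abs_mul, abs_of_pos hη]
          have : |w - -1 * 0| = -w := by rw [abs_of_neg]; ring_nf; linarith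
          rw [this]
          calc η * -w ≤ η * (1/η) := by nlinarith
          _ = 1 := by field_simp
        · simp
      · rw [max_eq_left h2]
        have h1η : 0 < 1/η := by positivity
        constructor
        · have : w - -1 * (-w - 1/η) = -(1/η) := by ring
          rw [this]
          have : η * -(1/η) = -1 := by field_simp
          rw [this]; simp
        · have : η * (w - -1 * (-w - 1/η)) = -1 := by field_simp; ring
          rw [this]
          rw [abs_of_nonpos (by nlinarith : -1 * (-w - 1/η) ≤ 0)]; ring
    · subst h; simp
    · rw [Real.sign_of_pos h, abs_of_pos h]
      rcases le_total (w - 1/η) 0 with h2 | h2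
      · rw [max_eq_right h2]
        constructor
        · rw [abs_mul, abs_of_pos hη, abs_of_pos (by linarith : (0:ℝ) < w - 1*0)]
          calc η * (w - 1*0) = η * w := by ring
          _ ≤ η * (1/η) := by nlinarith
          _ = 1 := by field_simp
        · simp
      · rw [max_eq_left h2]
        have h1η : 0 < 1/η := by positivity
        constructor
        · have : η * (w - 1 * (w - 1/η)) = 1 := by field_simp; ring
          rw [this]; simp
        · have : η * (w - 1 * (w - 1/η)) = 1 := by field_simp; ring
          rw [this]
          rw [abs_of_nonneg (by nlinarith : (0:ℝ) ≤ 1 * (w - 1/η))]; ring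
  obtain ⟨h1, h2⟩ := hs1
  have hx : (η * (w - xn)) * x ≤ |x| := by
    calc (η * (w - xn)) * x ≤ |(η * (w - xn)) * x| := le_abs_self _
    _ = |η * (w - xn)| * |x| := abs_mul _ _
    _ ≤ 1 * |x| := by nlinarith [abs_nonneg x]
    _ = |x| := one_mul _
  nlinarith

lemma clip_key (r w x : ℝ) (hr : 0 ≤ r) (hx : |x| ≤ r) :
    0 ≤ (x - clip r w) * (clip r w - w) := by
  have hx' := abs_le.mp hx
  unfold clip
  rcases le_total w (-r) with h | h
  · rw [max_eq_right h, min_eq_left (by linarith)]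
    nlinarith [hx'.1]
  · rw [max_eq_left h]
    rcases le_total w r with h2 | h2
    · rw [min_eq_left h2]; ring_nf; nlinarith
    · rw [min_eq_right h2]; nlinarith [hx'.2]

lemma ip_eval_s19 {p : ℕ} (v w : Trip p) :
    ip v w = ∑ j, v.1 j * w.1 j + (∑ j, v.2.1 j * w.2.1 j + ∑ j, v.2.2 j * w.2.2 j) := by
  simp [ip, toSum, dotProduct, Fintype.sum_sum_type]

lemma blockSum_eq {p K : ℕ} (A : Matrix (Fin p) (Fin p) ℝ) (π : Fin p → Fin K)
    (β : Fin p → ℝ) : blockSum A π β = A *ᵥ β := by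
  funext j0
  simp only [blockSum, Finset.sum_apply, Ablock, mulVec, dotProduct, submatrix_apply, id]
  rw [← Fintype.sum_fiberwise π (fun j => A j0 j * β j)]

lemma Ablock_mulVec {p K : ℕ} (A : Matrix (Fin p) (Fin p) ℝ) (π : Fin p → Fin K)
    (ut : Vec p) (j : Fin p) :
    ((Ablock A π (π j))ᵀ *ᵥ ut) ⟨j, rfl⟩ = (Aᵀ *ᵥ ut) j := by
  simp [Ablock, mulVec, dotProduct, transpose_apply]

lemma ipH_eval_s19 {p K : ℕ} (A : Matrix (Fin p) (Fin p) ℝ) (μ κ : ℝ)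
    (π : Fin p → Fin K) (η : Fin K → ℝ) (v w : Trip p) :
    ipH (Matrix.fromBlocks (Matrix.diagonal fun j => η (π j))
          (Matrix.fromCols (0 : Matrix (Fin p) (Fin p) ℝ) Aᵀ)
          (Matrix.fromRows (0 : Matrix (Fin p) (Fin p) ℝ) A)
          (Matrix.fromBlocks (μ • (1 : Matrix (Fin p) (Fin p) ℝ))
            (-(1 : Matrix (Fin p) (Fin p) ℝ)) (-(1 : Matrix (Fin p) (Fin p) ℝ))
            (κ • (1 : Matrix (Fin p) (Fin p) ℝ)))) v w
    = ∑ j, v.1 j * (η (π j) * w.1 j + (Aᵀ *ᵥ w.2.2) j)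
      + (∑ j, v.2.1 j * (μ * w.2.1 j - w.2.2 j)
      + ∑ j, v.2.2 j * ((A *ᵥ w.1) j - w.2.1 j + κ * w.2.2 j)) := by
  simp only [ipH, toSum, fromBlocks_mulVec, Sum.elim_comp_inl, Sum.elim_comp_inr,
    fromCols_mulVec_sumElim, fromRows_mulVec, sumElim_dotProduct_sumElim,
    diagonal_mulVec_single]
  simp [dotProduct, mulVec_diagonal, Pi.add_apply, smul_mulVec, one_mulVec,
    neg_mulVec, mul_add, mul_sub, add_mul, Finset.sum_add_distrib]
  ring

/-- One step of the improved parallel (linearized) PPA for the Dantzig selector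
satisfies the PPA variational inequality with matrix
`H_K = [[D, 0, Aᵀ], [0, μI, −I], [A, −I, ((K+1)/μ)I]]`, where `D` is the
block-diagonal matrix whose `i`-th block is `η_i I_{p_i}`. -/
theorem stmt19 {p K : ℕ} (A : Matrix (Fin p) (Fin p) ℝ) (c : Vec p)
    (μ r : ℝ) (hμ : 0 < μ) (hr : 0 ≤ r)
    (π : Fin p → Fin K) (hπ : Function.Surjective π)
    (η : Fin K → ℝ) (hη : ∀ i, 0 < η i)
    (hS : ∀ i : Fin K,
      ((η i) • (1 : Matrix {j // π j = i} {j // π j = i} ℝ) -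
        μ • ((Ablock A π i)ᵀ * Ablock A π i)).PosDef)
    (βt zt ut βn zn un : Vec p) (hzt : inZ r zt)
    (hβn : ∀ i : Fin K, ∀ j : {j // π j = i},
      βn j.val = soft (1 / η i) (βt j.val + ((Ablock A π i)ᵀ *ᵥ ut) j / η i))
    (hzn : zn = fun j => clip r (zt j - ut j / μ))
    (hun : un = ut - (μ / (K + 1 : ℝ)) •
      ((2 : ℝ) • (blockSum A π βn - zn - c) - (blockSum A π βt - zt - c))) :
    ∀ gg : Trip p, inZ r gg.2.1 →
      ipH (Matrix.fromBlocks (Matrix.diagonal fun j => η (π j))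
          (Matrix.fromCols (0 : Matrix (Fin p) (Fin p) ℝ) Aᵀ)
          (Matrix.fromRows (0 : Matrix (Fin p) (Fin p) ℝ) A)
          (Matrix.fromBlocks (μ • (1 : Matrix (Fin p) (Fin p) ℝ))
            (-(1 : Matrix (Fin p) (Fin p) ℝ)) (-(1 : Matrix (Fin p) (Fin p) ℝ))
            (((K + 1 : ℝ) / μ) • (1 : Matrix (Fin p) (Fin p) ℝ))))
        (gg - (βn, zn, un)) ((βt, zt, ut) - (βn, zn, un)) ≤
      l1 gg.1 - l1 βn + ip (gg - (βn, zn, un)) (Fop A c (βn, zn, un)) := by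
  intro gg hgz
  obtain ⟨β, z, u⟩ := gg
  have hK : (0:ℝ) < (K:ℝ) + 1 := by positivity
  have hβn' : ∀ j : Fin p, βn j = soft (1/η (π j)) (βt j + (Aᵀ *ᵥ ut) j / η (π j)) := by
    intro j
    have h := hβn (π j) ⟨j, rfl⟩
    rwa [Ablock_mulVec] at h
  have hβj : ∀ j, (β j - βn j) * (η (π j) * (βt j - βn j) + (Aᵀ *ᵥ ut) j)
      ≤ |β j| - |βn j| := by
    intro j
    have h := soft_key (η (π j)) (βt j + (Aᵀ *ᵥ ut) j / η (π j)) (β j) (hη _)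
    rw [← hβn' j] at h
    have hne : η (π j) ≠ 0 := (hη _).ne'
    have heq : η (π j) * (βt j + (Aᵀ *ᵥ ut) j / η (π j) - βn j)
        = η (π j) * (βt j - βn j) + (Aᵀ *ᵥ ut) j := by field_simp; ring
    rw [heq] at h
    exact h
  have hzj : ∀ j, 0 ≤ (z j - zn j) * (μ * (zn j - zt j) + ut j) := by
    intro j
    have h := clip_key r (zt j - ut j / μ) (z j) hr (hgz j)
    have hμne : μ ≠ 0 := hμ.ne'
    have h2 := mul_nonneg hμ.le h
    have hzj' : zn j = clip r (zt j - ut j / μ) := by rw [hzn]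
    rw [← hzj'] at h2
    have hud : μ * (ut j / μ) = ut j := by field_simp
    have heq : μ * ((z j - zn j) * (zn j - (zt j - ut j / μ)))
        = (z j - zn j) * (μ * (zn j - zt j) + ut j) := by
      calc μ * ((z j - zn j) * (zn j - (zt j - ut j / μ)))
          = (z j - zn j) * (μ * (zn j - zt j) + μ * (ut j / μ)) := by ring
        _ = (z j - zn j) * (μ * (zn j - zt j) + ut j) := by rw [hud]
    rw [← heq]; exact h2
  have huj : ∀ j, (A *ᵥ βt) j - (A *ᵥ βn) j - (zt j - zn j)
      + ((K + 1 : ℝ)/μ) * (ut j - un j) = (A *ᵥ βn) j - zn j - c j := by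
    intro j
    have h : un j = ut j - (μ / (K + 1 : ℝ)) *
        ((2:ℝ) * ((A *ᵥ βn) j - zn j - c j) - ((A *ᵥ βt) j - zt j - c j)) := by
      rw [hun, blockSum_eq, blockSum_eq]
      simp [Pi.smul_apply, smul_eq_mul]
    rw [h]
    have : ((K + 1 : ℝ)/μ) * (μ / (K + 1 : ℝ)) = 1 := by field_simp
    field_simp
    ring
  rw [ipH_eval_s19, ip_eval_s19]
  simp only [Prod.fst_sub, Prod.snd_sub, Pi.sub_apply, Fop, Pi.neg_apply, l1]
  have key : ∀ j : Fin p,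
      (β j - βn j) * (η (π j) * (βt j - βn j) + (Aᵀ *ᵥ (ut - un)) j)
      + ((z j - zn j) * (μ * (zt j - zn j) - (ut j - un j))
      + (u j - un j) * ((A *ᵥ (βt - βn)) j - (zt j - zn j) + ((K + 1 : ℝ)/μ) * (ut j - un j)))
      ≤ (|β j| - |βn j|)
      + ((β j - βn j) * (-(Aᵀ *ᵥ un) j)
      + ((z j - zn j) * un j
      + (u j - un j) * ((A *ᵥ βn) j - zn j - c j))) := by
    intro j
    have h1 := hβj j
    have h2 := hzj j
    have h3 := huj j
    have hA : (Aᵀ *ᵥ (ut - un)) j = (Aᵀ *ᵥ ut) j - (Aᵀ *ᵥ un) j := by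
      rw [mulVec_sub]; rfl
    have hB : (A *ᵥ (βt - βn)) j = (A *ᵥ βt) j - (A *ᵥ βn) j := by
      rw [mulVec_sub]; rfl
    rw [hA, hB, h3]
    ring_nf
    ring_nf at h1 h2
    linarith
  calc ∑ j, (β j - βn j) * (η (π j) * (βt j - βn j) + (Aᵀ *ᵥ (ut - un)) j)
      + (∑ j, (z j - zn j) * (μ * (zt j - zn j) - (ut j - un j))
      + ∑ j, (u j - un j) * ((A *ᵥ (βt - βn)) j - (zt j - zn j) + ((K + 1 : ℝ)/μ) * (ut j - un j)))
      = ∑ j, ((β j - βn j) * (η (π j) * (βt j - βn j) + (Aᵀ *ᵥ (ut - un)) j)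
        + ((z j - zn j) * (μ * (zt j - zn j) - (ut j - un j))
        + (u j - un j) * ((A *ᵥ (βt - βn)) j - (zt j - zn j) + ((K + 1 : ℝ)/μ) * (ut j - un j)))) := by
        rw [Finset.sum_add_distrib, Finset.sum_add_distrib]
    _ ≤ ∑ j, ((|β j| - |βn j|)
        + ((β j - βn j) * (-(Aᵀ *ᵥ un) j)
        + ((z j - zn j) * un j
        + (u j - un j) * ((A *ᵥ βn) j - zn j - c j)))) := Finset.sum_le_sum (fun j _ => key j)
    _ = ∑ j, |β j| - ∑ j, |βn j|
        + (∑ j, (β j - βn j) * (-(Aᵀ *ᵥ un) j)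
        + (∑ j, (z j - zn j) * un j
        + ∑ j, (u j - un j) * ((A *ᵥ βn) j - zn j - c j))) := by
        rw [Finset.sum_add_distrib, Finset.sum_add_distrib, Finset.sum_add_distrib,
          Finset.sum_sub_distrib]
end
end
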